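/- Let A, B, C \in \mathbb{C}[x] be polynomials such that A(p_3) + B(p_3) p_4 + C(p_3) p_5 = 0 identically, where p_i(z) = z^i + H^i_{-2}z^2 + H^i_{-1}z + \sum_{k\ge1} H^i_k z^{-k} for i = 3,4,5 are formal Laurent series. Then A = B = C = 0. -/

import Mathlib

open HahnSeries Polynomial

private lemma sum_coeff' {ι : Type*} (s : Finset ι) (f : ι → LaurentSeries ℂ) (a : ℤ) :
    (∑ i ∈ s, f i).coeff a = ∑ i ∈ s, (f i).coeff a := by
  induction s using Finset.cons_induction with
  | empty => simp
  | cons i s hi ih => simp [Finset.sum_cons, HahnSeries.coeff_add, ih]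

private lemma le_orderTop_of' (x : LaurentSeries ℂ) (g : ℤ) (h : ∀ j < g, x.coeff j = 0) :
    (g : WithTop ℤ) ≤ x.orderTop := by
  by_cases hx : x = 0
  · simp [hx]
  · rw [HahnSeries.orderTop_of_ne_zero hx, WithTop.coe_le_coe]
    by_contra hlt
    push_neg at hlt
    exact (x.isWF_support.min_mem (HahnSeries.support_nonempty_iff.2 hx)) (h _ hlt)

private lemma ofPS_coeff_neg (f : PowerSeries ℂ) (j : ℤ) (hj : j < 0) :
    (HahnSeries.ofPowerSeries ℤ ℂ f).coeff j = 0 := by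
  rw [HahnSeries.ofPowerSeries_apply]
  apply HahnSeries.embDomain_notin_range
  rintro ⟨n, hn⟩
  simp at hn
  omega

private lemma p_spec (N : ℤ) (hN : N < -2) (a b : ℂ) (f : PowerSeries ℂ)
    (p : LaurentSeries ℂ)
    (hp : p = HahnSeries.single N 1 + HahnSeries.single (-2 : ℤ) a +
      HahnSeries.single (-1 : ℤ) b + HahnSeries.ofPowerSeries ℤ ℂ f) :
    p ≠ 0 ∧ p.order = N ∧ p.leadingCoeff = 1 := by
  set r : LaurentSeries ℂ := HahnSeries.single (-2 : ℤ) a + HahnSeries.single (-1 : ℤ) b +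
    HahnSeries.ofPowerSeries ℤ ℂ f with hr
  have hpr : p = HahnSeries.single N 1 + r := by rw [hp, hr]; ring
  have hrcoeff : ∀ j < (-2 : ℤ), r.coeff j = 0 := by
    intro j hj
    rw [hr]
    simp only [HahnSeries.coeff_add]
    rw [HahnSeries.coeff_single_of_ne (by omega), HahnSeries.coeff_single_of_ne (by omega),
      ofPS_coeff_neg f j (by omega)]
    ring
  have hrOT : ((-2 : ℤ) : WithTop ℤ) ≤ r.orderTop := le_orderTop_of' r (-2) hrcoeff
  have hlt : (HahnSeries.single N (1 : ℂ)).orderTop < r.orderTop := by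
    rw [HahnSeries.orderTop_single one_ne_zero]
    exact lt_of_lt_of_le (by exact_mod_cast hN) hrOT
  have hOT : p.orderTop = (N : WithTop ℤ) := by
    rw [hpr, HahnSeries.orderTop_add_eq_left hlt, HahnSeries.orderTop_single one_ne_zero]
  have hpne : p ≠ 0 := by
    intro h0
    rw [h0, HahnSeries.orderTop_zero] at hOT
    exact (WithTop.coe_ne_top hOT.symm)
  refine ⟨hpne, ?_, ?_⟩
  · have := HahnSeries.order_eq_orderTop_of_ne_zero hpne
    rw [hOT] at this
    exact_mod_cast this
  · rw [hpr, HahnSeries.leadingCoeff_add_eq_left hlt, HahnSeries.leadingCoeff_of_single]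

private lemma pow_spec (x : LaurentSeries ℂ) (hx : x ≠ 0) (hxl : x.leadingCoeff = 1) (n : ℕ) :
    x ^ n ≠ 0 ∧ (x ^ n).order = n • x.order ∧ (x ^ n).leadingCoeff = 1 := by
  induction n with
  | zero => simp [HahnSeries.leadingCoeff_one]
  | succ n ih =>
    obtain ⟨h1, h2, h3⟩ := ih
    have hne : x ^ (n + 1) ≠ 0 := by rw [pow_succ]; exact mul_ne_zero h1 hx
    have ho : (x ^ (n + 1)).order = (n + 1) • x.order := by
      rw [pow_succ, HahnSeries.order_mul h1 hx, h2, succ_nsmul]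
    refine ⟨hne, ho, ?_⟩
    rw [HahnSeries.leadingCoeff_eq, ho, succ_nsmul, ← h2, pow_succ,
      ← HahnSeries.order_mul h1 hx, ← HahnSeries.leadingCoeff_eq]
    calc (x ^ n * x).leadingCoeff
        = (x ^ n * x).coeff ((x ^ n).order + x.order) := by
          rw [HahnSeries.leadingCoeff_eq, HahnSeries.order_mul h1 hx]
      _ = (x ^ n).leadingCoeff * x.leadingCoeff := HahnSeries.coeff_mul_order_add_order _ _
      _ = 1 := by rw [h3, hxl, one_mul]

private lemma alg_smul (r : ℂ) (x : LaurentSeries ℂ) :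
    @HSMul.hSMul ℂ (LaurentSeries ℂ) (LaurentSeries ℂ)
      (@instHSMul ℂ (LaurentSeries ℂ) Algebra.toSMul) r x = r • x := by
  have hC : (algebraMap ℂ (LaurentSeries ℂ)) r = HahnSeries.C r := by
    rw [HahnSeries.algebraMap_apply',
      show (algebraMap ℂ (PowerSeries ℂ)) r = PowerSeries.C r from rfl,
      HahnSeries.ofPowerSeries_C]
  rw [Algebra.smul_def, hC, HahnSeries.C_mul_eq_smul]

private lemma aeval_spec (x : LaurentSeries ℂ) (hxo : x.order = -3)
    (hxl : x.leadingCoeff = 1) (A : Polynomial ℂ) (hA : A ≠ 0) :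
    Polynomial.aeval x A ≠ 0 ∧
      (Polynomial.aeval x A).order = -3 * (A.natDegree : ℤ) := by
  have hx : x ≠ 0 := HahnSeries.leadingCoeff_ne_zero.mp (by rw [hxl]; exact one_ne_zero)
  set d := A.natDegree with hd
  have hpow : ∀ i : ℕ, x ^ i ≠ 0 ∧ (x ^ i).order = -3 * (i : ℤ) ∧
      (x ^ i).leadingCoeff = 1 := by
    intro i
    obtain ⟨h1, h2, h3⟩ := pow_spec x hx hxl i
    refine ⟨h1, ?_, h3⟩
    rw [h2, hxo, nsmul_eq_mul]; ring
  have hsum : Polynomial.aeval x A = ∑ i ∈ Finset.range (d + 1), A.coeff i • x ^ i := by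
    rw [Polynomial.aeval_eq_sum_range (p := A) x]
    exact Finset.sum_congr rfl fun i _ => alg_smul _ _
  -- coefficients below -3d vanish
  have hlow : ∀ j < -3 * (d : ℤ), (Polynomial.aeval x A).coeff j = 0 := by
    intro j hj
    rw [hsum, sum_coeff']
    apply Finset.sum_eq_zero
    intro i hi
    have hi' : i ≤ d := Nat.lt_succ_iff.mp (Finset.mem_range.mp hi)
    rw [HahnSeries.coeff_smul, HahnSeries.coeff_eq_zero_of_lt_order, smul_zero]
    rw [(hpow i).2.1]
    have : ((i : ℤ)) ≤ (d : ℤ) := by exact_mod_cast hi'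
    omega
  -- coefficient at -3d is leading coeff of A
  have htop : (Polynomial.aeval x A).coeff (-3 * (d : ℤ)) = A.leadingCoeff := by
    rw [hsum, sum_coeff']
    rw [Finset.sum_eq_single d]
    · rw [HahnSeries.coeff_smul, smul_eq_mul]
      have : (x ^ d).coeff (-3 * (d : ℤ)) = 1 := by
        rw [← (hpow d).2.1, ← HahnSeries.leadingCoeff_eq, (hpow d).2.2]
      rw [this, mul_one, Polynomial.leadingCoeff, hd]
    · intro i hi hne
      have hi' : i ≤ d := Nat.lt_succ_iff.mp (Finset.mem_range.mp hi)
      have hilt : i < d := lt_of_le_of_ne hi' hne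
      rw [HahnSeries.coeff_smul, HahnSeries.coeff_eq_zero_of_lt_order, smul_zero]
      rw [(hpow i).2.1]
      have : ((i : ℤ)) < (d : ℤ) := by exact_mod_cast hilt
      omega
    · intro hmem
      exact absurd (Finset.mem_range.mpr (Nat.lt_succ_self d)) hmem
  have hlc : A.leadingCoeff ≠ 0 := Polynomial.leadingCoeff_ne_zero.mpr hA
  have hne : Polynomial.aeval x A ≠ 0 :=
    HahnSeries.ne_zero_of_coeff_ne_zero (htop ▸ hlc)
  refine ⟨hne, ?_⟩
  have h1 : (Polynomial.aeval x A).orderTop = ((-3 * (d : ℤ)) : WithTop ℤ) :=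
    le_antisymm (HahnSeries.orderTop_le_of_coeff_ne_zero (htop ▸ hlc))
      (le_orderTop_of' _ _ hlow)
  have := HahnSeries.order_eq_orderTop_of_ne_zero hne
  rw [h1] at this
  exact WithTop.coe_injective this

private lemma sum_two (x y : LaurentSeries ℂ) (h : x + y = 0)
    (hne : x.orderTop ≠ y.orderTop) : x = 0 ∧ y = 0 := by
  by_cases hx : x = 0
  · refine ⟨hx, ?_⟩
    rwa [hx, zero_add] at h
  · exfalso
    have hy : y = -x := by linear_combination h
    rw [hy, HahnSeries.orderTop_neg] at hne
    exact hne rfl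

/-- if `A(p₃) + B(p₃) p₄ + C(p₃) p₅ = 0` identically for the Laurent series
`p_i(z) = z^i + H^i_{-2} z² + H^i_{-1} z + ∑_{k≥1} H^i_k z^{-k}` (`i = 3,4,5`),
then `A = B = C = 0`.  (Laurent series are encoded in the variable `X = z⁻¹`.) -/
theorem stratum12_independence
    (H3m2 H3m1 H4m2 H4m1 H5m2 H5m1 : ℂ) (H3 H4 H5 : ℕ → ℂ)
    (p3 p4 p5 : LaurentSeries ℂ)
    (hp3 : p3 = HahnSeries.single (-3 : ℤ) 1 + HahnSeries.single (-2 : ℤ) H3m2 +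
      HahnSeries.single (-1 : ℤ) H3m1 +
      HahnSeries.ofPowerSeries ℤ ℂ (PowerSeries.mk fun k => if k = 0 then 0 else H3 k))
    (hp4 : p4 = HahnSeries.single (-4 : ℤ) 1 + HahnSeries.single (-2 : ℤ) H4m2 +
      HahnSeries.single (-1 : ℤ) H4m1 +
      HahnSeries.ofPowerSeries ℤ ℂ (PowerSeries.mk fun k => if k = 0 then 0 else H4 k))
    (hp5 : p5 = HahnSeries.single (-5 : ℤ) 1 + HahnSeries.single (-2 : ℤ) H5m2 +
      HahnSeries.single (-1 : ℤ) H5m1 +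
      HahnSeries.ofPowerSeries ℤ ℂ (PowerSeries.mk fun k => if k = 0 then 0 else H5 k))
    (A B C : Polynomial ℂ)
    (h : Polynomial.aeval p3 A + Polynomial.aeval p3 B * p4 + Polynomial.aeval p3 C * p5 = 0) :
    A = 0 ∧ B = 0 ∧ C = 0 := by
  obtain ⟨h3ne, h3o, h3l⟩ := p_spec (-3) (by norm_num) H3m2 H3m1 _ p3 hp3
  obtain ⟨h4ne, h4o, h4l⟩ := p_spec (-4) (by norm_num) H4m2 H4m1 _ p4 hp4
  obtain ⟨h5ne, h5o, h5l⟩ := p_spec (-5) (by norm_num) H5m2 H5m1 _ p5 hp5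
  set t1 := Polynomial.aeval p3 A with ht1
  set t2 := Polynomial.aeval p3 B * p4 with ht2
  set t3 := Polynomial.aeval p3 C * p5 with ht3
  -- facts about nonzero terms
  have f1 : A ≠ 0 → t1 ≠ 0 ∧ t1.order % 3 = 0 := by
    intro hA
    obtain ⟨hne, ho⟩ := aeval_spec p3 h3o h3l A hA
    exact ⟨hne, by rw [ho]; omega⟩
  have f2 : B ≠ 0 → t2 ≠ 0 ∧ t2.order % 3 = 2 := by
    intro hB
    obtain ⟨hne, ho⟩ := aeval_spec p3 h3o h3l B hB
    refine ⟨mul_ne_zero hne h4ne, ?_⟩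
    rw [ht2, HahnSeries.order_mul hne h4ne, ho, h4o]; omega
  have f3 : C ≠ 0 → t3 ≠ 0 ∧ t3.order % 3 = 1 := by
    intro hC
    obtain ⟨hne, ho⟩ := aeval_spec p3 h3o h3l C hC
    refine ⟨mul_ne_zero hne h5ne, ?_⟩
    rw [ht3, HahnSeries.order_mul hne h5ne, ho, h5o]; omega
  -- if t2 ≠ 0 then B ≠ 0, etc.
  have g2 : t2 ≠ 0 → t2.order % 3 = 2 := by
    intro ht
    by_cases hB : B = 0
    · exfalso; apply ht; rw [ht2, hB]; simp
    · exact (f2 hB).2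
  have g3 : t3 ≠ 0 → t3.order % 3 = 1 := by
    intro ht
    by_cases hC : C = 0
    · exfalso; apply ht; rw [ht3, hC]; simp
    · exact (f3 hC).2
  have g1 : t1 ≠ 0 → t1.order % 3 = 0 := by
    intro ht
    by_cases hA : A = 0
    · exfalso; apply ht; rw [ht1, hA]; simp
    · exact (f1 hA).2
  have h' : t1 + (t2 + t3) = 0 := by rw [← add_assoc]; exact h
  -- key: t2 + t3 nonzero has orderTop with residue 1 or 2
  have key : t2 + t3 ≠ 0 → ∃ m : ℤ, (t2 + t3).orderTop = (m : WithTop ℤ) ∧ m % 3 ≠ 0 := by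
    intro hne
    by_cases h2 : t2 = 0
    · have h3' : t3 ≠ 0 := by intro h0; apply hne; rw [h2, h0, add_zero]
      refine ⟨t3.order, ?_, ?_⟩
      · rw [h2, zero_add, ← HahnSeries.order_eq_orderTop_of_ne_zero h3']
      · rw [g3 h3']; omega
    by_cases h3' : t3 = 0
    · refine ⟨t2.order, ?_, ?_⟩
      · rw [h3', add_zero, ← HahnSeries.order_eq_orderTop_of_ne_zero h2]
      · rw [g2 h2]; omega
    · have ho2 := g2 h2
      have ho3 := g3 h3'
      have hneq : t2.order ≠ t3.order := by omega
      rcases lt_or_gt_of_ne hneq with hlt | hlt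
      · refine ⟨t2.order, ?_, by omega⟩
        rw [HahnSeries.orderTop_add_eq_left, ← HahnSeries.order_eq_orderTop_of_ne_zero h2]
        rw [← HahnSeries.order_eq_orderTop_of_ne_zero h2, ← HahnSeries.order_eq_orderTop_of_ne_zero h3']
        exact_mod_cast hlt
      · refine ⟨t3.order, ?_, by omega⟩
        rw [HahnSeries.orderTop_add_eq_right, ← HahnSeries.order_eq_orderTop_of_ne_zero h3']
        rw [← HahnSeries.order_eq_orderTop_of_ne_zero h2, ← HahnSeries.order_eq_orderTop_of_ne_zero h3']
        exact_mod_cast hlt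
  -- show t1 = 0 and t2 + t3 = 0
  have hsplit : t1 = 0 ∧ t2 + t3 = 0 := by
    by_cases hBC : t2 + t3 = 0
    · refine ⟨?_, hBC⟩
      rw [hBC, add_zero] at h'; exact h'
    · obtain ⟨m, hm, hm3⟩ := key hBC
      have hdist : t1.orderTop ≠ (t2 + t3).orderTop := by
        by_cases h1 : t1 = 0
        · rw [h1, HahnSeries.orderTop_zero, hm]
          exact fun hc => WithTop.coe_ne_top hc.symm
        · rw [← HahnSeries.order_eq_orderTop_of_ne_zero h1, hm]
          intro hc
          have : t1.order = m := by exact_mod_cast hc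
          have := g1 h1
          omega
      exact sum_two t1 (t2 + t3) h' hdist
  obtain ⟨h10, h230⟩ := hsplit
  -- now t2 = 0 and t3 = 0
  have h23 : t2 = 0 ∧ t3 = 0 := by
    by_cases h2 : t2 = 0
    · refine ⟨h2, ?_⟩; rwa [h2, zero_add] at h230
    · have h3' : t3 ≠ 0 := by
        intro h0; apply h2; rwa [h0, add_zero] at h230
      have hdist : t2.orderTop ≠ t3.orderTop := by
        rw [← HahnSeries.order_eq_orderTop_of_ne_zero h2, ← HahnSeries.order_eq_orderTop_of_ne_zero h3']
        have := g2 h2; have := g3 h3'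
        intro hc
        have : t2.order = t3.order := by exact_mod_cast hc
        omega
      exact sum_two t2 t3 h230 hdist
  obtain ⟨h20, h30⟩ := h23
  -- conclude
  have hA : A = 0 := by
    by_contra hA
    exact (f1 hA).1 h10
  have hB : B = 0 := by
    by_contra hB
    exact (f2 hB).1 h20
  have hC : C = 0 := by
    by_contra hC
    exact (f3 hC).1 h30
  exact ⟨hA, hB, hC⟩
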